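/- The polynomial P(x,y,z) = (x - (x+y+z)/3)(y - (x+y+z)/3)(z - (x+y+z)/3) is symmetric, homogeneous of degree 3, translation invariant, has S_1 = 0, S_2 = 0 and S_3 = 3, where S_a is the minimal total degree in the first a variables. In particular S_3 - S_1 = 3 is odd. -/
import Mathlib


open MvPolynomial

noncomputable section

/-- Variable type for the fusion of the first `a` variables: `Sum.inl i` are the
auxiliary variables `ξ i`, `Sum.inr none` is the fused variable (center of mass)
`z`, and `Sum.inr (some j)` are the untouched variables `z j` for `a ≤ j`. -/
abbrev FVars (N : ℕ) := Fin N ⊕ Option (Fin N)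

/-- The auxiliary variables `ξ i` for `i < a`, with the constraint `∑ ξ i = 0`
imposed by eliminating the last one. -/
def fuseXi (N a : ℕ) (i : Fin N) : MvPolynomial (FVars N) ℂ :=
  if i.val + 1 < a then X (Sum.inl i)
  else -(∑ j ∈ Finset.univ.filter (fun j : Fin N => j.val + 1 < a), X (Sum.inl j))

/-- Fusion substitution `z i = z + λ * ξ i` for `i < a`, where `λ` is the
polynomial variable and `z = X (Sum.inr none)`. -/
def fuse (N a : ℕ) : MvPolynomial (Fin N) ℂ →ₐ[ℂ] Polynomial (MvPolynomial (FVars N) ℂ) :=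
  MvPolynomial.aeval (fun i =>
    if i.val < a then Polynomial.C (X (Sum.inr none)) + Polynomial.X * Polynomial.C (fuseXi N a i)
    else Polynomial.C (X (Sum.inr (some i))))

/-- `Qcoeff N a P m` is the coefficient `Q^m` of `λ^m` in the fusion expansion of `P`. -/
def Qcoeff (N a : ℕ) (P : MvPolynomial (Fin N) ℂ) (m : ℕ) : MvPolynomial (FVars N) ℂ :=
  (fuse N a P).coeff m

/-- `minDeg N P a` is `S_a`: the minimal total degree of `P` in `z 1, ..., z a`. -/
def minDeg (N : ℕ) (P : MvPolynomial (Fin N) ℂ) (a : ℕ) : ℕ :=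
  sInf {d | ∃ mo ∈ P.support, d = ∑ i ∈ Finset.univ.filter (fun i : Fin N => i.val < a), mo i}

/-- Translation invariance of a multivariate polynomial. -/
def TransInv (N : ℕ) (P : MvPolynomial (Fin N) ℂ) : Prop :=
  ∀ c : ℂ, MvPolynomial.aeval (fun i : Fin N => X i + MvPolynomial.C c) P = P

/-- Symmetry of a multivariate polynomial. -/
def SymmPoly (N : ℕ) (P : MvPolynomial (Fin N) ℂ) : Prop :=
  ∀ σ : Equiv.Perm (Fin N), rename ⇑σ P = P

/-- The counterexample polynomial
`P = (x - (x+y+z)/3)(y - (x+y+z)/3)(z - (x+y+z)/3)`. -/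
def Pcex : MvPolynomial (Fin 3) ℂ :=
  (X 0 - MvPolynomial.C (1/3 : ℂ) * (X 0 + X 1 + X 2)) *
    ((X 1 - MvPolynomial.C (1/3 : ℂ) * (X 0 + X 1 + X 2)) *
      (X 2 - MvPolynomial.C (1/3 : ℂ) * (X 0 + X 1 + X 2)))


lemma Pcex_prod : Pcex = ∏ i : Fin 3, (X i - MvPolynomial.C (1/3 : ℂ) * ∑ j : Fin 3, X j) := by
  simp [Pcex, Fin.prod_univ_three, Fin.sum_univ_three, mul_assoc]

lemma Pcex_symm : SymmPoly 3 Pcex := by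
  intro σ
  rw [Pcex_prod, map_prod]
  simp only [map_sub, map_mul, rename_C, rename_X, map_sum]
  have hs : (∑ j : Fin 3, (X (σ j) : MvPolynomial (Fin 3) ℂ)) = ∑ j : Fin 3, X j :=
    Equiv.sum_comp σ (fun j => (X j : MvPolynomial (Fin 3) ℂ))
  rw [hs]
  exact Equiv.prod_comp σ (fun i => X i - MvPolynomial.C (1/3:ℂ) * ∑ j : Fin 3, X j)

lemma Pcex_hom : Pcex.IsHomogeneous 3 := by
  have h1 : ∀ i : Fin 3, (X i - MvPolynomial.C (1/3:ℂ) * (X 0 + X 1 + X 2) :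
      MvPolynomial (Fin 3) ℂ).IsHomogeneous 1 := fun i =>
    (isHomogeneous_X _ _).sub ((((isHomogeneous_X _ _).add (isHomogeneous_X _ _)).add
      (isHomogeneous_X _ _)).C_mul _)
  exact (h1 0).mul ((h1 1).mul (h1 2))

lemma Pcex_trans : TransInv 3 Pcex := by
  intro c
  have h3 : (MvPolynomial.C (1/3:ℂ) : MvPolynomial (Fin 3) ℂ) * 3 = 1 := by
    rw [show (3 : MvPolynomial (Fin 3) ℂ) = MvPolynomial.C 3 from by
      rw [map_ofNat], ← MvPolynomial.C_mul]
    norm_num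
  have hfac : ∀ i : Fin 3,
      MvPolynomial.aeval (fun i : Fin 3 => X i + MvPolynomial.C c)
        (X i - MvPolynomial.C (1/3:ℂ) * ∑ j : Fin 3, X j) =
      X i - MvPolynomial.C (1/3:ℂ) * ∑ j : Fin 3, X j := by
    intro i
    simp only [map_sub, map_mul, map_sum, map_add, aeval_X, aeval_C, algebraMap_eq,
      Fin.sum_univ_three]
    linear_combination (-(MvPolynomial.C c : MvPolynomial (Fin 3) ℂ)) * h3
  rw [Pcex_prod, map_prod]
  exact Finset.prod_congr rfl (fun i _ => hfac i)

lemma Pcex_coeff : Pcex.coeff (Finsupp.single 2 3) = 2/27 := by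
  simp [Pcex, coeff_mul, coeff_sub, coeff_C_mul, coeff_add, coeff_X',
    Finsupp.antidiagonal_single, Finset.sum_map, Finsupp.single_eq_single_iff,
    Finset.Nat.sum_antidiagonal_eq_sum_range_succ_mk, Finset.sum_range_succ]
  norm_num

lemma Pcex_supp : Finsupp.single (2 : Fin 3) 3 ∈ Pcex.support := by
  rw [mem_support_iff, Pcex_coeff]; norm_num

lemma Pcex_md1 : minDeg 3 Pcex 1 = 0 := by
  apply Nat.sInf_eq_zero.mpr
  left
  refine ⟨Finsupp.single 2 3, Pcex_supp, ?_⟩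
  rw [show Finset.univ.filter (fun i : Fin 3 => i.val < 1) = {0} from by decide]
  simp [Finsupp.single_apply]

lemma Pcex_md2 : minDeg 3 Pcex 2 = 0 := by
  apply Nat.sInf_eq_zero.mpr
  left
  refine ⟨Finsupp.single 2 3, Pcex_supp, ?_⟩
  rw [show Finset.univ.filter (fun i : Fin 3 => i.val < 2) = {0, 1} from by decide]
  simp [Finsupp.single_apply]

lemma Pcex_md3 : minDeg 3 Pcex 3 = 3 := by
  have hset : {d | ∃ mo ∈ Pcex.support, d = ∑ i ∈ Finset.univ.filter
      (fun i : Fin 3 => i.val < 3), mo i} = {3} := by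
    ext d
    simp only [Set.mem_setOf_eq, Set.mem_singleton_iff]
    constructor
    · rintro ⟨mo, hmo, rfl⟩
      have h := Pcex_hom (mem_support_iff.mp hmo)
      rw [show Finset.univ.filter (fun i : Fin 3 => i.val < 3) = Finset.univ from by decide]
      have h2 : (Finsupp.weight 1) mo = ∑ i : Fin 3, mo i := by
        simp [Finsupp.weight_apply, Finsupp.sum_fintype]
      omega
    · rintro rfl
      refine ⟨Finsupp.single 2 3, Pcex_supp, ?_⟩
      rw [show Finset.univ.filter (fun i : Fin 3 => i.val < 3) = Finset.univ from by decide]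
      simp [Fin.sum_univ_three, Finsupp.single_apply]
  rw [minDeg, hset, csInf_singleton]

/-- `Pcex` is symmetric, homogeneous of degree 3, translation
invariant, and has `S_1 = 0`, `S_2 = 0`, `S_3 = 3`; in particular
`S_3 - S_1 = 3` is odd. -/
theorem stmt7 :
    SymmPoly 3 Pcex ∧ Pcex.IsHomogeneous 3 ∧ TransInv 3 Pcex ∧
    minDeg 3 Pcex 1 = 0 ∧ minDeg 3 Pcex 2 = 0 ∧ minDeg 3 Pcex 3 = 3 ∧
    Odd (minDeg 3 Pcex 3 - minDeg 3 Pcex 1) := by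
  refine ⟨Pcex_symm, Pcex_hom, Pcex_trans, Pcex_md1, Pcex_md2, Pcex_md3, ?_⟩
  rw [Pcex_md3, Pcex_md1]
  exact ⟨1, by norm_num⟩
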